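/- Let (b_n) be a nondecreasing sequence of integers with b_n ≥ 2 and b_n → ∞, let X = ∏_n ℤ(b_n), let u_n be the character of X given by u_n(ω) = exp(2πi a_n / b_n) for ω = (a_n) ∈ X, and let G_u = s_u(X) = {ω ∈ X : u_n(ω) → 1} be equipped with the metric ρ(x, y) = d(x, y) + sup_n |u_n(x) − u_n(y)|, where d is the standard metric of X. Then the direct sum G = ⨁_n ℤ(b_n) (the subgroup of X consisting of finitely supported sequences) is dense in (G_u, ρ). -/

import Mathlib

open Filter Topology

/-- The value at `ω ∈ X = ∏ n, ℤ(b n)` of the character given by the generator of the `n`-th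
summand of `⨁ n, ℤ(b n)`: `u_n(ω) = exp(2πi a_n / b_n)` where `a_n = (ω n).val`. -/
noncomputable def prodChar (b : ℕ → ℕ) (m : ℕ) (ω : (n : ℕ) → ZMod (b n)) : ℂ :=
  Complex.exp (2 * Real.pi * Complex.I * ((ω m).val : ℂ) / (b m : ℂ))

/-- The standard metric of `X = ∏ n, ℤ(b n)`: `d(x, y) = 2⁻ⁿ` where `n` is the first index
at which the coordinates of `x` and `y` differ (and `d(x, x) = 0`). -/
noncomputable def prodStdDist (b : ℕ → ℕ) (x y : (n : ℕ) → ZMod (b n)) : ℝ :=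
  open scoped Classical in
  if x = y then 0 else (2 : ℝ)⁻¹ ^ sInf {n : ℕ | x n ≠ y n}

/-- The subgroup `s_u(X) = {ω : u_n(ω) → 1}` of `X = ∏ n, ℤ(b n)`. -/
def sUX (b : ℕ → ℕ) : Set ((n : ℕ) → ZMod (b n)) :=
  {ω | Tendsto (fun n => prodChar b n ω) atTop (𝓝 1)}

/-- The Polish group metric `ρ(x, y) = d(x, y) + sup_n |u_n(x) − u_n(y)|` on `s_u(X)`. -/
noncomputable def prodRho (b : ℕ → ℕ) (x y : (n : ℕ) → ZMod (b n)) : ℝ :=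
  prodStdDist b x y + ⨆ n : ℕ, ‖prodChar b n x - prodChar b n y‖

/-- Let `(b n)` be a nondecreasing sequence of integers `≥ 2` tending to infinity. The direct
sum `G = ⨁ n, ℤ(b n)` — the set of finitely supported elements of `X = ∏ n, ℤ(b n)` — is
dense in `G_u = (s_u(X), ρ)`. -/
theorem directSum_dense_in_Gu
    (b : ℕ → ℕ) (hmono : Monotone b) (hb : ∀ n, 2 ≤ b n)
    (htends : Tendsto b atTop atTop) :
    ∀ ω ∈ sUX b, ∀ ε > (0 : ℝ), ∃ g : (n : ℕ) → ZMod (b n),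
      {n : ℕ | g n ≠ 0}.Finite ∧ prodRho b ω g < ε := by
  intro ω hω ε hε
  -- choose N₁ with 2⁻¹ ^ N₁ < ε / 2
  obtain ⟨N₁, hN₁⟩ : ∃ N : ℕ, (2 : ℝ)⁻¹ ^ N < ε / 2 := by
    obtain ⟨N, hN⟩ := exists_pow_lt_of_lt_one (by linarith : (0:ℝ) < ε/2) (by norm_num : (2:ℝ)⁻¹ < 1)
    exact ⟨N, hN⟩
  -- choose N₂ with |u_n(ω) - 1| < ε / 4 for n ≥ N₂
  have hconv : ∀ᶠ n in atTop, ‖prodChar b n ω - 1‖ < ε / 4 := by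
    have := hω.eventually (Metric.ball_mem_nhds (1 : ℂ) (by linarith : (0:ℝ) < ε/4))
    filter_upwards [this] with n hn
    simpa [Metric.mem_ball, Complex.dist_eq] using hn
  obtain ⟨N₂, hN₂⟩ := hconv.exists_forall_of_atTop
  set N := max N₁ N₂ with hN
  classical
  refine ⟨fun n => if n < N then ω n else 0, ?_, ?_⟩
  · exact (Set.finite_Iio N).subset (fun n hn => by
      by_contra h
      simp only [Set.mem_Iio, not_lt] at h
      exact hn (by simp [Nat.not_lt.mpr h]))
  · set g : (n : ℕ) → ZMod (b n) := fun n => if n < N then ω n else 0 with hg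
    have hchar : ∀ n, N ≤ n → prodChar b n g = 1 := by
      intro n hn
      haveI : NeZero (b n) := ⟨by have := hb n; omega⟩
      have h0 : g n = 0 := by simp [hg, Nat.not_lt.mpr hn]
      rw [prodChar, h0, ZMod.val_zero]
      simp
    have hchar' : ∀ n, n < N → prodChar b n g = prodChar b n ω := by
      intro n hn; simp [prodChar, hg, hn]
    have hd : prodStdDist b ω g < ε / 2 := by
      unfold prodStdDist
      split
      · linarith
      · rename_i hne
        have hSne : {n : ℕ | ω n ≠ g n}.Nonempty := by
          by_contra h
          exact hne (funext fun n => by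
            by_contra hc
            exact h ⟨n, hc⟩)
        have hle : N ≤ sInf {n : ℕ | ω n ≠ g n} := by
          refine le_csInf hSne fun n hn => ?_
          by_contra h
          push_neg at h
          exact hn (by simp [hg, h])
        calc (2:ℝ)⁻¹ ^ sInf {n : ℕ | ω n ≠ g n} ≤ (2:ℝ)⁻¹ ^ N := by
              apply pow_le_pow_of_le_one (by norm_num) (by norm_num) hle
          _ ≤ (2:ℝ)⁻¹ ^ N₁ := pow_le_pow_of_le_one (by norm_num) (by norm_num) (le_max_left _ _)
          _ < ε / 2 := hN₁
    have hsup : (⨆ n : ℕ, ‖prodChar b n ω - prodChar b n g‖) ≤ ε / 4 := by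
      apply ciSup_le
      intro n
      by_cases hn : n < N
      · rw [hchar' n hn]
        simp
        linarith
      · push_neg at hn
        rw [hchar n hn]
        exact le_of_lt (hN₂ n (le_trans (le_max_right _ _) hn))
    have : prodRho b ω g = prodStdDist b ω g + ⨆ n : ℕ, ‖prodChar b n ω - prodChar b n g‖ := rfl
    rw [this]
    linarith
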